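/- Let U be a generic two-player game on A = {1,...,k} × {1,...,ℓ} in which neither player has a strictly dominant action. Then for every pair of profiles a, b ∈ A such that a is not a pure Nash equilibrium of U, the profile b is reachable from a under the canonical transition relation (best-replying players repeat, non-best-replying players may play anything). -/

import Mathlib

/-- Auxiliary reachability lemma: if player 1 is not best-replying at `a`
(i.e. `f a.2 ≠ a.1`), then every profile `b` is reachable. -/
lemma stmt14_auxA {K L : Type*} (f : L → K) (g : K → L)
    (hd1 : ∀ x : K, ∃ c : L, f c ≠ x) (hd2 : ∀ c : L, ∃ r : K, g r ≠ c)
    (a b : K × L) (hA : f a.2 ≠ a.1) :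
    Relation.ReflTransGen
      (fun p q : K × L => (f p.2 = p.1 → q.1 = p.1) ∧ (g p.1 = p.2 → q.2 = p.2))
      a b := by
  set R : K × L → K × L → Prop :=
    fun p q => (f p.2 = p.1 → q.1 = p.1) ∧ (g p.1 = p.2 → q.2 = p.2) with hR
  by_cases hg : g a.1 = a.2
  · by_cases h2 : b.2 = a.2
    · exact Relation.ReflTransGen.single ⟨fun h => absurd h hA, fun _ => h2⟩
    · by_cases h1 : g b.1 = a.2
      · obtain ⟨r, hr⟩ := hd2 a.2
        have s1 : R a (r, a.2) := ⟨fun h => absurd h hA, fun _ => rfl⟩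
        by_cases h3 : f a.2 = r
        · by_cases h4 : f b.2 = r
          · obtain ⟨c, hc⟩ := hd1 r
            have hca : c ≠ a.2 := fun e => hc (e ▸ h3)
            have s2 : R (r, a.2) (r, c) := ⟨fun _ => rfl, fun h => absurd h hr⟩
            by_cases h5 : g r = c
            · have s3 : R (r, c) (b.1, c) := ⟨fun h => absurd h hc, fun _ => rfl⟩
              have hbc : g b.1 ≠ c := by rw [h1]; exact fun e => hca e.symm
              have s4 : R (b.1, c) b := ⟨fun _ => rfl, fun h => absurd h hbc⟩
              exact Relation.ReflTransGen.head s1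
                (Relation.ReflTransGen.head s2
                  (Relation.ReflTransGen.head s3 (Relation.ReflTransGen.single s4)))
            · have s3 : R (r, c) b := ⟨fun h => absurd h hc, fun h => absurd h h5⟩
              exact Relation.ReflTransGen.head s1
                (Relation.ReflTransGen.head s2 (Relation.ReflTransGen.single s3))
          · have s2 : R (r, a.2) (r, b.2) := ⟨fun _ => rfl, fun h => absurd h hr⟩
            have s3 : R (r, b.2) b := ⟨fun h => absurd h h4, fun _ => rfl⟩
            exact Relation.ReflTransGen.head s1
              (Relation.ReflTransGen.head s2 (Relation.ReflTransGen.single s3))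
        · have s2 : R (r, a.2) b := ⟨fun h => absurd h h3, fun h => absurd h hr⟩
          exact Relation.ReflTransGen.head s1 (Relation.ReflTransGen.single s2)
      · have s1 : R a (b.1, a.2) := ⟨fun h => absurd h hA, fun _ => rfl⟩
        have s2 : R (b.1, a.2) b := ⟨fun _ => rfl, fun h => absurd h h1⟩
        exact Relation.ReflTransGen.head s1 (Relation.ReflTransGen.single s2)
  · exact Relation.ReflTransGen.single ⟨fun h => absurd h hA, fun h => absurd h hg⟩

/-- Abstract form of the main theorem. -/
lemma stmt14_aux {K L : Type*} (f : L → K) (g : K → L)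
    (hd1 : ∀ x : K, ∃ c : L, f c ≠ x) (hd2 : ∀ c : L, ∃ r : K, g r ≠ c)
    (a b : K × L) (h : ¬ (f a.2 = a.1 ∧ g a.1 = a.2)) :
    Relation.ReflTransGen
      (fun p q : K × L => (f p.2 = p.1 → q.1 = p.1) ∧ (g p.1 = p.2 → q.2 = p.2))
      a b := by
  rcases not_and_or.mp h with h1 | h2
  · exact stmt14_auxA f g hd1 hd2 a b h1
  · by_cases h1 : f a.2 = a.1
    · obtain ⟨c, hc⟩ := hd1 a.1
      have s1 : (f a.2 = a.1 → (a.1, c).1 = a.1) ∧ (g a.1 = a.2 → (a.1, c).2 = a.2) :=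
        ⟨fun _ => rfl, fun hh => absurd hh h2⟩
      exact Relation.ReflTransGen.head s1 (stmt14_auxA f g hd1 hd2 (a.1, c) b hc)
    · exact stmt14_auxA f g hd1 hd2 a b h1

/-- In a generic two-player game where neither player has a strictly dominant
action, from any profile `a` that is not a pure Nash equilibrium, every
profile `b` is reachable under the canonical transition relation
(best-replying players repeat, others arbitrary). -/
theorem stmt14 (k ℓ : ℕ) (hk : 0 < k) (hl : 0 < ℓ)
    (u1 u2 : Fin k × Fin ℓ → ℝ)
    (hgen1 : ∀ a : Fin k × Fin ℓ, ∃! x : Fin k, ∀ y : Fin k,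
      u1 (y, a.2) ≤ u1 (x, a.2))
    (hgen2 : ∀ a : Fin k × Fin ℓ, ∃! x : Fin ℓ, ∀ y : Fin ℓ,
      u2 (a.1, y) ≤ u2 (a.1, x))
    (hdom1 : ¬ ∃ x : Fin k, ∀ b : Fin ℓ, ∀ y : Fin k, u1 (y, b) ≤ u1 (x, b))
    (hdom2 : ¬ ∃ x : Fin ℓ, ∀ b : Fin k, ∀ y : Fin ℓ, u2 (b, y) ≤ u2 (b, x)) :
    ∀ a b : Fin k × Fin ℓ,
      ¬ ((∀ y : Fin k, u1 (y, a.2) ≤ u1 a) ∧ (∀ y : Fin ℓ, u2 (a.1, y) ≤ u2 a)) →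
      Relation.ReflTransGen
        (fun p q : Fin k × Fin ℓ =>
          ((∀ y : Fin k, u1 (y, p.2) ≤ u1 p) → q.1 = p.1) ∧
          ((∀ y : Fin ℓ, u2 (p.1, y) ≤ u2 p) → q.2 = p.2))
        a b := by
  have x0 : Fin k := ⟨0, hk⟩
  have y0 : Fin ℓ := ⟨0, hl⟩
  set f : Fin ℓ → Fin k := fun c => (hgen1 (x0, c)).choose with hf
  set g : Fin k → Fin ℓ := fun r => (hgen2 (r, y0)).choose with hgdef
  have hf_max : ∀ c : Fin ℓ, ∀ y : Fin k, u1 (y, c) ≤ u1 (f c, c) :=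
    fun c => (hgen1 (x0, c)).choose_spec.1
  have hf_uniq : ∀ (c : Fin ℓ) (x : Fin k), (∀ y, u1 (y, c) ≤ u1 (x, c)) → x = f c :=
    fun c x hx => (hgen1 (x0, c)).choose_spec.2 x hx
  have hg_max : ∀ r : Fin k, ∀ y : Fin ℓ, u2 (r, y) ≤ u2 (r, g r) :=
    fun r => (hgen2 (r, y0)).choose_spec.1
  have hg_uniq : ∀ (r : Fin k) (x : Fin ℓ), (∀ y, u2 (r, y) ≤ u2 (r, x)) → x = g r :=
    fun r x hx => (hgen2 (r, y0)).choose_spec.2 x hx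
  have hP1 : ∀ p : Fin k × Fin ℓ, (∀ y : Fin k, u1 (y, p.2) ≤ u1 p) ↔ f p.2 = p.1 := by
    intro p
    constructor
    · intro h; exact (hf_uniq p.2 p.1 h).symm
    · intro h y; have := hf_max p.2 y; rwa [h] at this
  have hP2 : ∀ p : Fin k × Fin ℓ, (∀ y : Fin ℓ, u2 (p.1, y) ≤ u2 p) ↔ g p.1 = p.2 := by
    intro p
    constructor
    · intro h; exact (hg_uniq p.1 p.2 h).symm
    · intro h y; have := hg_max p.1 y; rwa [h] at this
  have hd1 : ∀ x : Fin k, ∃ c : Fin ℓ, f c ≠ x := by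
    intro x
    push_neg at hdom1
    obtain ⟨c, y, hy⟩ := hdom1 x
    exact ⟨c, fun e => absurd (e ▸ hf_max c y) (not_le.mpr hy)⟩
  have hd2 : ∀ c : Fin ℓ, ∃ r : Fin k, g r ≠ c := by
    intro c
    push_neg at hdom2
    obtain ⟨r, y, hy⟩ := hdom2 c
    exact ⟨r, fun e => absurd (e ▸ hg_max r y) (not_le.mpr hy)⟩
  intro a b hna
  have hna' : ¬ (f a.2 = a.1 ∧ g a.1 = a.2) := by
    intro ⟨h1, h2⟩
    exact hna ⟨(hP1 a).2 h1, (hP2 a).2 h2⟩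
  refine Relation.ReflTransGen.mono ?_ _ _ (stmt14_aux f g hd1 hd2 a b hna')
  intro p q ⟨h1, h2⟩
  exact ⟨fun hp => h1 ((hP1 p).1 hp), fun hp => h2 ((hP2 p).1 hp)⟩
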